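/- arXiv:2201.09758 — 2 statements merged into one kernel-verified Lean document; each statement's English description precedes it below -/
import Mathlib

section
/- Let R be a ring with identity and P a two-sided ideal. P is an almost prime ideal if and only if for all a, b ∈ R, aRb ⊆ P and aRb ⊄ P² implies a ∈ P or b ∈ P. -/
variable {R : Type*}

/-- `P` is a right ideal of the (possibly nonunital, noncommutative) ring `R`. -/
def IsRightIdeal [NonUnitalRing R] (P : AddSubgroup R) : Prop :=
  ∀ a ∈ P, ∀ r : R, a * r ∈ P

/-- The product `AB` of two right ideals: the additive subgroup generated by products. -/
def idealMul [NonUnitalRing R] (A B : AddSubgroup R) : AddSubgroup R :=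
  AddSubgroup.closure {x : R | ∃ a ∈ A, ∃ b ∈ B, x = a * b}

/-- `P` is a two-sided ideal of `R`. -/
def IsTwoSidedIdealSub [NonUnitalRing R] (P : AddSubgroup R) : Prop :=
  ∀ a ∈ P, ∀ r : R, a * r ∈ P ∧ r * a ∈ P

/-- `P` is an almost prime (two-sided) ideal. -/
def IsAlmostPrimeTwoSided [NonUnitalRing R] (P : AddSubgroup R) : Prop :=
  IsTwoSidedIdealSub P ∧ P ≠ ⊤ ∧
    ∀ A B : AddSubgroup R, IsTwoSidedIdealSub A → IsTwoSidedIdealSub B →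
      idealMul A B ≤ P → ¬ idealMul A B ≤ idealMul P P → A ≤ P ∨ B ≤ P

lemma mul_mem_idealMul [NonUnitalRing R] {A B : AddSubgroup R} {a b : R}
    (ha : a ∈ A) (hb : b ∈ B) : a * b ∈ idealMul A B :=
  AddSubgroup.subset_closure ⟨a, ha, b, hb, rfl⟩

lemma idealMul_le [NonUnitalRing R] {A B P : AddSubgroup R}
    (h : ∀ a ∈ A, ∀ b ∈ B, a * b ∈ P) : idealMul A B ≤ P := by
  refine (AddSubgroup.closure_le _).2 ?_
  rintro x ⟨a, ha, b, hb, rfl⟩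
  exact h a ha b hb

/-- The two-sided ideal generated by `a` in a ring with identity. -/
def genIdeal [Ring R] (a : R) : AddSubgroup R :=
  AddSubgroup.closure {x : R | ∃ r s : R, x = r * a * s}

lemma self_mem_genIdeal [Ring R] (a : R) : a ∈ genIdeal a :=
  AddSubgroup.subset_closure ⟨1, 1, by simp⟩

lemma arb_mem [Ring R] (a b r : R) : a * r * b ∈ idealMul (genIdeal a) (genIdeal b) := by
  have h1 : a * r ∈ genIdeal a := AddSubgroup.subset_closure ⟨1, r, by simp [mul_assoc]⟩
  exact mul_mem_idealMul h1 (self_mem_genIdeal b)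

lemma genIdeal_twoSided [Ring R] (a : R) : IsTwoSidedIdealSub (genIdeal a) := by
  intro x hx r
  induction hx using AddSubgroup.closure_induction with
  | mem x hx =>
    obtain ⟨u, v, rfl⟩ := hx
    constructor
    · exact AddSubgroup.subset_closure ⟨u, v * r, by simp [mul_assoc]⟩
    · exact AddSubgroup.subset_closure ⟨r * u, v, by simp [mul_assoc]⟩
  | zero => exact ⟨by simpa using zero_mem (genIdeal a), by simpa using zero_mem (genIdeal a)⟩
  | add x y hx hy ihx ihy =>
    exact ⟨by rw [add_mul]; exact add_mem ihx.1 ihy.1,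
           by rw [mul_add]; exact add_mem ihx.2 ihy.2⟩
  | neg x hx ihx =>
    exact ⟨by rw [neg_mul]; exact neg_mem ihx.1,
           by rw [mul_neg]; exact neg_mem ihx.2⟩

/-- A two-sided ideal `P` of a ring with identity is almost prime iff
`aRb ⊆ P` and `aRb ⊄ P²` implies `a ∈ P` or `b ∈ P`. -/
theorem almostPrime_iff_aRb [Ring R] (P : AddSubgroup R)
    (hP : IsTwoSidedIdealSub P) (hproper : P ≠ ⊤) :
    IsAlmostPrimeTwoSided P ↔
      ∀ a b : R, (∀ r : R, a * r * b ∈ P) →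
        ¬ (∀ r : R, a * r * b ∈ idealMul P P) → a ∈ P ∨ b ∈ P := by
  constructor
  · rintro ⟨-, -, hprime⟩ a b hPin hPnot
    have hAB : idealMul (genIdeal a) (genIdeal b) ≤ P := by
      refine idealMul_le ?_
      intro u hu v hv
      induction hu using AddSubgroup.closure_induction with
      | mem u hu =>
        induction hv using AddSubgroup.closure_induction with
        | mem v hv =>
          obtain ⟨r, s, rfl⟩ := hu
          obtain ⟨r', s', rfl⟩ := hv
          have h1 : a * (s * r') * b ∈ P := hPin (s * r')
          have h2 : r * (a * (s * r') * b) * s' ∈ P :=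
            ((hP _ ((hP _ h1 r).2) s').1)
          have he : r * a * s * (r' * b * s') = r * (a * (s * r') * b) * s' := by
            simp [mul_assoc]
          rw [he]
          exact h2
        | zero => simpa using zero_mem P
        | add x y hx hy ihx ihy => rw [mul_add]; exact add_mem ihx ihy
        | neg x hx ihx => rw [mul_neg]; exact neg_mem ihx
      | zero => simpa using zero_mem P
      | add x y hx hy ihx ihy => rw [add_mul]; exact add_mem ihx ihy
      | neg x hx ihx => rw [neg_mul]; exact neg_mem ihx
    have hnot : ¬ idealMul (genIdeal a) (genIdeal b) ≤ idealMul P P := by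
      intro hle
      exact hPnot fun r => hle (arb_mem a b r)
    rcases hprime _ _ (genIdeal_twoSided a) (genIdeal_twoSided b) hAB hnot with h | h
    · exact Or.inl (h (self_mem_genIdeal a))
    · exact Or.inr (h (self_mem_genIdeal b))
  · intro hcond
    refine ⟨hP, hproper, ?_⟩
    intro A B hA hB hAB hnot
    by_contra hc
    push_neg at hc
    obtain ⟨hcA, hcB⟩ := hc
    rw [SetLike.not_le_iff_exists] at hcA hcB
    obtain ⟨a₀, ha₀A, ha₀P⟩ := hcA
    obtain ⟨b₀, hb₀B, hb₀P⟩ := hcB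
    have key : ∀ a ∈ A, ∀ b ∈ B, ∀ r : R, a * r * b ∈ P := by
      intro a ha b hb r
      exact hAB (mul_mem_idealMul ((hA a ha r).1) hb)
    -- claim 1 : a ∉ P, b ∉ P
    have claim1 : ∀ a ∈ A, a ∉ P → ∀ b ∈ B, b ∉ P → ∀ r : R,
        a * r * b ∈ idealMul P P := by
      intro a ha haP b hb hbP
      by_contra hx
      push_neg at hx
      obtain ⟨r, hr⟩ := hx
      rcases hcond a b (key a ha b hb) (fun h => hr (h r)) with h | h
      · exact haP h
      · exact hbP h
    -- claim 2 : any a ∈ A, b ∉ P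
    have claim2 : ∀ a ∈ A, ∀ b ∈ B, b ∉ P → ∀ r : R,
        a * r * b ∈ idealMul P P := by
      intro a ha b hb hbP r
      by_cases haP : a ∈ P
      · have h1 : (a + a₀) * r * b ∈ idealMul P P := by
          have hsum : a + a₀ ∉ P := fun h => ha₀P (by simpa using sub_mem h haP)
          exact claim1 (a + a₀) (add_mem ha ha₀A) hsum b hb hbP r
        have h2 : a₀ * r * b ∈ idealMul P P := claim1 a₀ ha₀A ha₀P b hb hbP r
        have he : a * r * b = (a + a₀) * r * b - a₀ * r * b := by noncomm_ring
        rw [he]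
        exact sub_mem h1 h2
      · exact claim1 a ha haP b hb hbP r
    -- claim 3 : any a ∈ A, any b ∈ B
    have claim3 : ∀ a ∈ A, ∀ b ∈ B, ∀ r : R, a * r * b ∈ idealMul P P := by
      intro a ha b hb r
      by_cases hbP : b ∈ P
      · have hsum : b + b₀ ∉ P := fun h => hb₀P (by simpa using sub_mem h hbP)
        have h1 : a * r * (b + b₀) ∈ idealMul P P :=
          claim2 a ha (b + b₀) (add_mem hb hb₀B) hsum r
        have h2 : a * r * b₀ ∈ idealMul P P := claim2 a ha b₀ hb₀B hb₀P r
        have he : a * r * b = a * r * (b + b₀) - a * r * b₀ := by noncomm_ring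
        rw [he]
        exact sub_mem h1 h2
      · exact claim2 a ha b hb hbP r
    refine hnot (idealMul_le ?_)
    intro a ha b hb
    simpa using claim3 a ha b hb 1
end

section
/- Let R be a ring, I a two-sided ideal of R, and P a right ideal with I ⊆ P. If P is an almost prime right ideal of R, then P/I is an almost prime right ideal of R/I. -/
variable {R : Type*}

/-- `P` is an almost prime right ideal. -/
def IsAlmostPrimeRight [NonUnitalRing R] (P : AddSubgroup R) : Prop :=
  IsRightIdeal P ∧ P ≠ ⊤ ∧
    ∀ A B : AddSubgroup R, IsRightIdeal A → IsRightIdeal B →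
      idealMul A B ≤ P → ¬ idealMul A B ≤ idealMul P P → A ≤ P ∨ B ≤ P

/-- The ring congruence associated to a two-sided-ideal additive subgroup `N`. -/
def ringConOf [NonUnitalRing R] (N : AddSubgroup R)
    (hr : ∀ x ∈ N, ∀ r : R, x * r ∈ N) (hl : ∀ x ∈ N, ∀ r : R, r * x ∈ N) : RingCon R where
  r x y := x - y ∈ N
  iseqv := ⟨fun x => by simpa using N.zero_mem, fun {x y} h => by simpa using N.neg_mem h,
    fun {x y z} h1 h2 => by simpa using N.add_mem h1 h2⟩
  add' := fun {a b c d} h1 h2 => by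
    have h1' : a - b ∈ N := h1
    have h2' : c - d ∈ N := h2
    show a + c - (b + d) ∈ N
    rw [add_sub_add_comm]
    exact N.add_mem h1' h2'
  mul' := fun {a b c d} h1 h2 => by
    have h1' : a - b ∈ N := h1
    have h2' : c - d ∈ N := h2
    show a * c - b * d ∈ N
    have h3 : (a - b) * c ∈ N := hr _ h1' c
    have h4 : b * (c - d) ∈ N := hl _ h2' b
    have h5 := N.add_mem h3 h4
    have e : (a - b) * c + b * (c - d) = a * c - b * d := by
      rw [sub_mul, mul_sub]; abel
    rwa [e] at h5

/-- The quotient map `R → R/N` as an additive monoid homomorphism. -/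
def qmap [NonUnitalRing R] (c : RingCon R) : R →+ c.Quotient where
  toFun x := x
  map_zero' := rfl
  map_add' _ _ := rfl


section Aux
variable [NonUnitalRing R]

lemma qmap_mul (c : RingCon R) (x y : R) : qmap c (x * y) = qmap c x * qmap c y := rfl

lemma qmap_surjective (c : RingCon R) : Function.Surjective (qmap c) := fun y =>
  Quotient.inductionOn' y fun x => ⟨x, rfl⟩

lemma qmap_eq_iff (N : AddSubgroup R) (hr) (hl) (x y : R) :
    qmap (ringConOf N hr hl) x = qmap (ringConOf N hr hl) y ↔ x - y ∈ N := by
  show (x : (ringConOf N hr hl).Quotient) = y ↔ _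
  rw [RingCon.eq]
  rfl

lemma idealMul_map (c : RingCon R) (A B : AddSubgroup R) :
    (idealMul A B).map (qmap c) = idealMul (A.map (qmap c)) (B.map (qmap c)) := by
  rw [idealMul, idealMul, AddMonoidHom.map_closure (qmap c)]
  congr 1
  ext x
  constructor
  · rintro ⟨y, ⟨a, ha, b, hb, rfl⟩, rfl⟩
    exact ⟨_, ⟨a, ha, rfl⟩, _, ⟨b, hb, rfl⟩, rfl⟩
  · rintro ⟨_, ⟨a, ha, rfl⟩, _, ⟨b, hb, rfl⟩, rfl⟩
    exact ⟨a * b, ⟨a, ha, b, hb, rfl⟩, rfl⟩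

end Aux

/-- If `I` is a two-sided ideal contained in an almost prime right ideal `P`, then
`P/I` is an almost prime right ideal of `R/I`. -/
theorem quotient_almostPrime [NonUnitalRing R] (I P : AddSubgroup R)
    (hI : IsTwoSidedIdealSub I) (hIP : I ≤ P) (hP : IsAlmostPrimeRight P) :
    IsAlmostPrimeRight
      (AddSubgroup.map
        (qmap (ringConOf I (fun x hx r => (hI x hx r).1) (fun x hx r => (hI x hx r).2)))
        P) :=  by
  set q := qmap (ringConOf I (fun x hx r => (hI x hx r).1) (fun x hx r => (hI x hx r).2))
    with hq
  have hsurj : Function.Surjective q := qmap_surjective _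
  have hkey : ∀ x y : R, q x = q y ↔ x - y ∈ I := fun x y => qmap_eq_iff I _ _ x y
  have hcomap : ∀ S : AddSubgroup R, I ≤ S → (S.map q).comap q = S := by
    intro S hIS
    ext x
    constructor
    · rintro ⟨s, hs, hqs⟩
      have : s - x ∈ S := hIS ((hkey s x).1 hqs)
      have := S.sub_mem hs this
      simpa using this
    · intro hx
      exact ⟨x, hx, rfl⟩
  refine ⟨?_, ?_, ?_⟩
  · rintro _ ⟨p, hp, rfl⟩ r
    obtain ⟨r', rfl⟩ := hsurj r
    exact ⟨p * r', hP.1 p hp r', rfl⟩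
  · intro h
    apply hP.2.1
    have := hcomap P hIP
    rw [h] at this
    rw [← this]
    ext x
    simp [AddSubgroup.mem_comap]
  · intro A' B' hA' hB' hle hnle
    set A := A'.comap q with hA
    set B := B'.comap q with hB
    have hmapA : A.map q = A' := AddSubgroup.map_comap_eq_self_of_surjective hsurj A'
    have hmapB : B.map q = B' := AddSubgroup.map_comap_eq_self_of_surjective hsurj B'
    have hAr : IsRightIdeal A := by
      intro a ha r
      have : q (a * r) = q a * q r := qmap_mul _ a r
      show q (a * r) ∈ A'
      rw [this]
      exact hA' (q a) ha (q r)
    have hBr : IsRightIdeal B := by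
      intro a ha r
      have : q (a * r) = q a * q r := qmap_mul _ a r
      show q (a * r) ∈ B'
      rw [this]
      exact hB' (q a) ha (q r)
    have h1 : idealMul A B ≤ P := by
      intro x hx
      have hqx : q x ∈ idealMul A' B' := by
        rw [← hmapA, ← hmapB, ← idealMul_map]
        exact ⟨x, hx, rfl⟩
      have : q x ∈ P.map q := hle hqx
      have : x ∈ (P.map q).comap q := this
      rwa [hcomap P hIP] at this
    have h2 : ¬ idealMul A B ≤ idealMul P P := by
      intro h
      apply hnle
      rw [← hmapA, ← hmapB, ← idealMul_map, ← idealMul_map]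
      exact AddSubgroup.map_mono h
    rcases hP.2.2 A B hAr hBr h1 h2 with h | h
    · left; rw [← hmapA]; exact AddSubgroup.map_mono h
    · right; rw [← hmapB]; exact AddSubgroup.map_mono h
end
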